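/- Let ρ = (1-ε)|ψ⟩⟨ψ| + ε Σ_k λ_k |ψ_k⟩⟨ψ_k| be a density matrix where {|ψ⟩} ∪ {|ψ_k⟩} is an orthonormal family, 0 < ε < 1/2, λ_k ≥ 0 with Σ_k λ_k = 1, and O is a Hermitian operator with operator norm at most 1. Then |Tr(ρⁿ O)/Tr(ρⁿ) − ⟨ψ|O|ψ⟩| ≤ 2(ε/(1−ε))ⁿ for every n ≥ 1. -/

import Mathlib

open Matrix BigOperators

lemma vmv_mul {d : ℕ} (a b c e : Fin d → ℂ) :
    vecMulVec a b * vecMulVec c e = (b ⬝ᵥ c) • vecMulVec a e := by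
  ext i j
  simp only [Matrix.mul_apply, vecMulVec_apply, Matrix.smul_apply, smul_eq_mul, dotProduct,
    Finset.sum_mul]
  exact Finset.sum_congr rfl (fun k _ => by ring)

lemma trace_vmv_mul {d : ℕ} (a b : Fin d → ℂ) (O : Matrix (Fin d) (Fin d) ℂ) :
    (vecMulVec a b * O).trace = b ⬝ᵥ (O *ᵥ a) := by
  simp only [Matrix.trace, Matrix.diag, Matrix.mul_apply, vecMulVec_apply, dotProduct, mulVec]
  rw [Finset.sum_comm]
  exact Finset.sum_congr rfl fun j _ => by
    rw [Finset.mul_sum]; exact Finset.sum_congr rfl fun i _ => by ring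

lemma trace_vmv {d : ℕ} (a b : Fin d → ℂ) : (vecMulVec a b).trace = b ⬝ᵥ a := by
  simp [Matrix.trace, Matrix.diag, vecMulVec_apply, dotProduct, mul_comm]

theorem stmt_0 {d : ℕ} {ι : Type*} [Fintype ι]
    (ε : ℝ) (hε : 0 < ε) (hε2 : ε < 1/2)
    (lam : ι → ℝ) (hlam : ∀ k, 0 ≤ lam k) (hsum : ∑ k, lam k = 1)
    (ψ : Fin d → ℂ) (ψk : ι → Fin d → ℂ)
    (hψ : star ψ ⬝ᵥ ψ = 1)
    (hψk : ∀ k, star (ψk k) ⬝ᵥ ψk k = 1)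
    (hortho : ∀ k, star ψ ⬝ᵥ ψk k = 0)
    (hortho' : ∀ k k', k ≠ k' → star (ψk k) ⬝ᵥ ψk k' = 0)
    (O : Matrix (Fin d) (Fin d) ℂ) (hO : O.IsHermitian)
    (hOnorm : ∀ v : Fin d → ℂ, ‖star v ⬝ᵥ (O *ᵥ v)‖ ≤ (star v ⬝ᵥ v).re)
    (ρ : Matrix (Fin d) (Fin d) ℂ)
    (hρ : ρ = (1 - (ε : ℂ)) • vecMulVec ψ (star ψ)
      + (ε : ℂ) • ∑ k, (lam k : ℂ) • vecMulVec (ψk k) (star (ψk k)))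
    (n : ℕ) (hn : 1 ≤ n) :
    ‖(ρ ^ n * O).trace / (ρ ^ n).trace - star ψ ⬝ᵥ (O *ᵥ ψ)‖
      ≤ 2 * (ε / (1 - ε)) ^ n := by
  classical
  set P : Matrix (Fin d) (Fin d) ℂ := vecMulVec ψ (star ψ) with hP
  set Q : ι → Matrix (Fin d) (Fin d) ℂ := fun k => vecMulVec (ψk k) (star (ψk k)) with hQ
  have hPP : P * P = P := by rw [hP, vmv_mul, hψ, one_smul]
  have hPQ : ∀ k, P * Q k = 0 := fun k => by rw [hP, hQ, vmv_mul, hortho k, zero_smul]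
  have hQP : ∀ k, Q k * P = 0 := by
    intro k
    have h0 : star (ψk k) ⬝ᵥ ψ = 0 := by
      have h := hortho k
      rw [star_dotProduct] at h
      exact star_eq_zero.mp h
    rw [hP, hQ, vmv_mul, h0, zero_smul]
  have hQQ : ∀ k k', Q k * Q k' = if k = k' then Q k else 0 := by
    intro k k'
    rw [hQ]
    simp only [vmv_mul]
    by_cases h : k = k'
    · subst h; rw [hψk, one_smul, if_pos rfl]
    · rw [hortho' _ _ h, zero_smul, if_neg h]
  have hρ' : ρ = ((1 : ℂ) - ε) • P + ∑ k, (((ε : ℂ) * lam k)) • Q k := by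
    rw [hρ, Finset.smul_sum]
    simp only [smul_smul, hQ]
  have hpow : ρ ^ n = ((1 : ℂ) - ε) ^ n • P + ∑ k, ((ε : ℂ) * lam k) ^ n • Q k := by
    induction n, hn using Nat.le_induction with
    | base => simpa using hρ'
    | succ m hm ih =>
      have hBD : (∑ k, ((ε : ℂ) * lam k) ^ m • Q k) * (∑ k, ((ε : ℂ) * lam k) • Q k)
          = ∑ k, ((ε : ℂ) * lam k) ^ (m + 1) • Q k := by
        rw [Finset.sum_mul]
        refine Finset.sum_congr rfl fun k _ => ?_
        rw [Finset.mul_sum]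
        simp only [smul_mul_assoc, mul_smul_comm, smul_smul, hQQ, smul_ite, smul_zero,
          Finset.sum_ite_eq, Finset.mem_univ, if_pos]
        first | rw [← pow_succ] | rw [← pow_succ'] | (congr 1; ring)
      rw [pow_succ, ih, hρ']
      rw [add_mul, mul_add, mul_add, Finset.mul_sum, Finset.sum_mul]
      simp only [smul_mul_assoc, mul_smul_comm, hPP, hPQ, hQP, smul_zero,
        Finset.sum_const_zero, add_zero, zero_add]
      rw [smul_smul, hBD]
      congr 1
      rw [← pow_succ']
  set s : ℂ := star ψ ⬝ᵥ (O *ᵥ ψ) with hs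
  set t : ι → ℂ := fun k => star (ψk k) ⬝ᵥ (O *ᵥ ψk k) with ht
  have htr : (ρ ^ n).trace = ((1 : ℂ) - ε) ^ n + ∑ k, ((ε : ℂ) * lam k) ^ n := by
    rw [hpow]
    simp [Matrix.trace_add, Matrix.trace_smul, Matrix.trace_sum, hP, hQ, trace_vmv, hψ, hψk,
      (by rw [dotProduct_comm]; exact hψ : ψ ⬝ᵥ star ψ = 1),
      (fun k => by rw [dotProduct_comm]; exact hψk k : ∀ k, ψk k ⬝ᵥ star (ψk k) = 1),
      smul_eq_mul]
  have htrO : (ρ ^ n * O).trace = ((1 : ℂ) - ε) ^ n * s + ∑ k, ((ε : ℂ) * lam k) ^ n * t k := by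
    rw [hpow, add_mul, Finset.sum_mul]
    simp [Matrix.smul_mul, Matrix.trace_add, Matrix.trace_smul, Matrix.trace_sum, hP, hQ,
      trace_vmv_mul, smul_eq_mul, hs, ht]
  set a : ℝ := (1 - ε) ^ n with haa
  set b : ℝ := ∑ k, (ε * lam k) ^ n with hbb
  have ha : 0 < a := pow_pos (by linarith) n
  have hb : 0 ≤ b := Finset.sum_nonneg fun k _ => pow_nonneg (mul_nonneg hε.le (hlam k)) n
  have hDc : (ρ ^ n).trace = ((a + b : ℝ) : ℂ) := by rw [htr, haa, hbb]; push_cast; ring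
  have hDne : (ρ ^ n).trace ≠ 0 := by
    rw [hDc]
    exact_mod_cast ne_of_gt (by linarith : (0:ℝ) < a + b)
  have key : (ρ ^ n * O).trace / (ρ ^ n).trace - s
      = (∑ k, ((ε : ℂ) * lam k) ^ n * (t k - s)) / (ρ ^ n).trace := by
    rw [div_sub' hDne, htrO, htr]
    congr 1
    have : (∑ k, ((ε : ℂ) * lam k) ^ n * (t k - s))
        = (∑ k, ((ε : ℂ) * lam k) ^ n * t k) - (∑ k, ((ε : ℂ) * lam k) ^ n) * s := by
      rw [Finset.sum_mul, ← Finset.sum_sub_distrib]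
      exact Finset.sum_congr rfl fun k _ => by ring
    rw [this]
    ring
  have hts : ∀ k, ‖t k - s‖ ≤ 2 := by
    intro k
    have h1 : ‖t k‖ ≤ 1 := by
      have := hOnorm (ψk k); rwa [hψk k, Complex.one_re] at this
    have h2 : ‖s‖ ≤ 1 := by
      have := hOnorm ψ; rwa [hψ, Complex.one_re] at this
    calc ‖t k - s‖ ≤ ‖t k‖ + ‖s‖ :=
          norm_sub_le _ _
      _ ≤ 2 := by linarith
  have hnum : ‖∑ k, ((ε : ℂ) * lam k) ^ n * (t k - s)‖ ≤ 2 * b := by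
    calc ‖∑ k, ((ε : ℂ) * lam k) ^ n * (t k - s)‖
        ≤ ∑ k, ‖((ε : ℂ) * lam k) ^ n * (t k - s)‖ :=
          norm_sum_le _ _
      _ ≤ ∑ k, (ε * lam k) ^ n * 2 := by
          refine Finset.sum_le_sum fun k _ => ?_
          rw [norm_mul]
          have hcast : (((ε : ℂ)) * (lam k : ℂ)) ^ n = (((ε * lam k) ^ n : ℝ) : ℂ) := by
            push_cast; ring
          rw [hcast, Complex.norm_real, Real.norm_eq_abs,
            abs_of_nonneg (pow_nonneg (mul_nonneg hε.le (hlam k)) n)]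
          exact mul_le_mul_of_nonneg_left (hts k)
            (pow_nonneg (mul_nonneg hε.le (hlam k)) n)
      _ = 2 * b := by
          rw [hbb, Finset.mul_sum]
          exact Finset.sum_congr rfl fun k _ => mul_comm _ _
  have hbε : b ≤ ε ^ n := by
    rw [hbb]
    calc (∑ k, (ε * lam k) ^ n) = ε ^ n * ∑ k, lam k ^ n := by
          rw [Finset.mul_sum]; exact Finset.sum_congr rfl fun k _ => by rw [mul_pow]
      _ ≤ ε ^ n * 1 := by
          refine mul_le_mul_of_nonneg_left ?_ (pow_nonneg hε.le n)
          calc (∑ k, lam k ^ n) ≤ ∑ k, lam k := by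
                refine Finset.sum_le_sum fun k _ => ?_
                refine pow_le_of_le_one (hlam k) ?_ (by omega)
                rw [← hsum]
                exact Finset.single_le_sum (fun k _ => hlam k) (Finset.mem_univ k)
            _ = 1 := hsum
      _ = ε ^ n := mul_one _
  rw [key, norm_div, hDc, Complex.norm_real, Real.norm_eq_abs, abs_of_pos (by linarith : (0:ℝ) < a + b)]
  calc ‖∑ k, ((ε : ℂ) * lam k) ^ n * (t k - s)‖ / (a + b)
      ≤ (2 * b) / (a + b) := by
        apply div_le_div₀ (by positivity) hnum (by linarith) le_rfl
    _ ≤ (2 * ε ^ n) / a := by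
        apply div_le_div₀ (by positivity) (by linarith) ha (by linarith)
    _ = 2 * (ε / (1 - ε)) ^ n := by
        rw [div_pow, haa]; ring
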